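/- Let a > 0 and let e : (a,∞) → M₂(ℂ) be differentiable with columns e₁, e₂ satisfying B·e_j′(x) + (μ/x)·J·e_j(x) = e_j(x) for all real x > a and j = 1,2. Suppose that e^{−R_j x}·e_j(x) → z_j⁰ as x → +∞ along the reals, where R₁ = i, R₂ = −i, z₁⁰ = (i,1)ᵀ, z₂⁰ = (−i,1)ᵀ. Then det e(x) = 2i for every x > a. -/

import Mathlib

open Complex Matrix Set Filter

noncomputable def Bmat : Matrix (Fin 2) (Fin 2) ℂ := !![0, 1; -1, 0]
noncomputable def Jmat : Matrix (Fin 2) (Fin 2) ℂ := !![0, 1; 1, 0]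

/-- `R₁ = i` (index 0), `R₂ = -i` (index 1). -/
noncomputable def Rcoef : Fin 2 → ℂ := ![Complex.I, -Complex.I]

/-- `z₁⁰ = (i,1)ᵀ` (index 0), `z₂⁰ = (-i,1)ᵀ` (index 1). -/
noncomputable def z0vec : Fin 2 → Fin 2 → ℂ :=
  ![![Complex.I, 1], ![-Complex.I, 1]]

theorem stmt4 (μ : ℂ) (hμ : 0 < μ.re) (a : ℝ) (ha : 0 < a)
    (e : ℝ → Matrix (Fin 2) (Fin 2) ℂ)
    -- each column is differentiable and solves the singular Dirac system on (a,∞)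
    (hdiff : ∀ j : Fin 2, ∀ x ∈ Set.Ioi a,
      DifferentiableAt ℝ (fun y => (fun i => e y i j)) x ∧
      Bmat.mulVec (deriv (fun y => (fun i => e y i j)) x) +
        (μ / (x : ℂ)) • Jmat.mulVec (fun i => e x i j) = (fun i => e x i j))
    -- asymptotics at +∞: e^{-R_j x} e_j(x) → z_j⁰
    (hasymp : ∀ j : Fin 2,
      Tendsto (fun x : ℝ => fun i => Complex.exp (-(Rcoef j) * x) * e x i j)
        atTop (nhds (z0vec j))) :
    ∀ x ∈ Set.Ioi a, (e x).det = 2 * Complex.I := by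
  set g : ℝ → ℂ := fun y => e y 0 0 * e y 1 1 - e y 0 1 * e y 1 0 with hg
  -- component derivatives
  have key : ∀ j : Fin 2, ∀ x ∈ Set.Ioi a,
      HasDerivAt (fun y => e y 0 j) ((μ / (x:ℂ)) * e x 0 j - e x 1 j) x ∧
      HasDerivAt (fun y => e y 1 j) (e x 0 j - (μ / (x:ℂ)) * e x 1 j) x := by
    intro j x hx
    obtain ⟨hd, heq⟩ := hdiff j x hx
    have hcol : HasDerivAt (fun y => (fun i => e y i j))
        (deriv (fun y => (fun i => e y i j)) x) x := hd.hasDerivAt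
    have hpi := hasDerivAt_pi.1 hcol
    have heq0 := congrFun heq 0
    have heq1 := congrFun heq 1
    simp [Bmat, Jmat, Matrix.mulVec, dotProduct, Fin.sum_univ_two] at heq0 heq1
    have h0 : deriv (fun y => (fun i => e y i j)) x 0 = (μ / (x:ℂ)) * e x 0 j - e x 1 j := by
      linear_combination -heq1
    have h1 : deriv (fun y => (fun i => e y i j)) x 1 = e x 0 j - (μ / (x:ℂ)) * e x 1 j := by
      linear_combination heq0
    exact ⟨h0 ▸ hpi 0, h1 ▸ hpi 1⟩
  -- derivative of g is zero on Ioi a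
  have hg0 : ∀ x ∈ Set.Ioi a, HasDerivAt g 0 x := by
    intro x hx
    obtain ⟨h00, h10⟩ := key 0 x hx
    obtain ⟨h01, h11⟩ := key 1 x hx
    have h := ((h00.mul h11).sub (h01.mul h10))
    convert h using 1
    case e'_9 => ring
    all_goals rfl
  -- g is constant on Ioi a
  have hconst : ∀ x ∈ Set.Ioi a, ∀ y ∈ Set.Ioi a, g x = g y := by
    intro x hx y hy
    apply (convex_Ioi a).is_const_of_fderivWithin_eq_zero
      (fun z hz => ((hg0 z hz).differentiableAt).differentiableWithinAt) _ hx hy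
    intro z hz
    have := ((hg0 z hz).hasFDerivAt.hasFDerivWithinAt).fderivWithin (isOpen_Ioi.uniqueDiffWithinAt hz)
    rw [this]
    ext v
    simp
  -- limit of g at infinity is 2i
  have hlim : Tendsto g atTop (nhds (2 * Complex.I)) := by
    have h0 := hasymp 0
    have h1 := hasymp 1
    rw [tendsto_pi_nhds] at h0 h1
    have e00 := h0 0
    have e10 := h0 1
    have e01 := h1 0
    have e11 := h1 1
    simp only [Rcoef, z0vec, Matrix.cons_val_zero, Matrix.cons_val_one, Matrix.head_cons] at e00 e10 e01 e11
    have heq : ∀ x : ℝ, g x =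
        (Complex.exp (-Complex.I * x) * e x 0 0) * (Complex.exp (-(-Complex.I) * x) * e x 1 1)
        - (Complex.exp (-(-Complex.I) * x) * e x 0 1) * (Complex.exp (-Complex.I * x) * e x 1 0) := by
      intro x
      have h1 : Complex.exp (-Complex.I * x) * Complex.exp (-(-Complex.I) * x) = 1 := by
        rw [← Complex.exp_add]
        norm_num
      calc g x = (Complex.exp (-Complex.I * x) * Complex.exp (-(-Complex.I) * x)) *
            (e x 0 0 * e x 1 1) -
          (Complex.exp (-Complex.I * x) * Complex.exp (-(-Complex.I) * x)) *
            (e x 0 1 * e x 1 0) := by rw [h1]; simp [hg]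
        _ = _ := by ring
    have := ((e00.mul e11).sub (e01.mul e10))
    have h2i : Complex.I * 1 - -Complex.I * 1 = 2 * Complex.I := by ring
    rw [h2i] at this
    exact this.congr (fun x => (heq x).symm)
  intro x hx
  -- g tends to g x as well
  have hlim2 : Tendsto g atTop (nhds (g x)) := by
    apply Tendsto.congr' _ tendsto_const_nhds
    filter_upwards [eventually_gt_atTop a] with y hy
    exact hconst x hx y hy
  have : g x = 2 * Complex.I := tendsto_nhds_unique hlim2 hlim
  rw [Matrix.det_fin_two]
  exact this
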